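/- Let α > 0 with α ≠ 1, let E_X and E_Y be finite nonempty types, and let p : E_X × E_Y → ℝ be a probability distribution (p(x,y) ≥ 0 for all (x,y) and the total sum is 1). Assume the marginal p_X(x) = Σ_y p(x,y) is strictly positive for every x ∈ E_X. Define the Tsallis α-entropy of a finitely supported distribution q by S_α(q) = (1/(1−α)) · (Σ q(i)^α − 1). Then S_α(p) = S_α(p_X) + Σ_{x ∈ E_X} p_X(x)^α · S_α(p(x,·)/p_X(x)), where p(x,·)/p_X(x) denotes the conditional distribution y ↦ p(x,y)/p_X(x) on E_Y. -/
import Mathlib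


open Finset

/-- The Tsallis (generalized degree-`α`) entropy of a distribution `q` on a finite type:
`S_α(q) = (1/(1-α)) (∑ q(i)^α - 1)`. -/
noncomputable def tsallisEntropy (α : ℝ) {E : Type*} [Fintype E] (q : E → ℝ) : ℝ :=
  (1 / (1 - α)) * (∑ i, q i ^ α - 1)

/-- the chain rule for the Tsallis `α`-entropy. If `p` is a probability
distribution on `E_X × E_Y` whose marginal `p_X` is everywhere positive, then
`S_α(p) = S_α(p_X) + ∑_x p_X(x)^α S_α(p(x,·)/p_X(x))`. -/
theorem stmt19 (α : ℝ) (hα : 0 < α) (hα1 : α ≠ 1)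
    {EX EY : Type*} [Fintype EX] [Fintype EY] [Nonempty EX] [Nonempty EY]
    (p : EX × EY → ℝ) (hp0 : ∀ z, 0 ≤ p z) (hp1 : ∑ z, p z = 1)
    (hpos : ∀ x : EX, 0 < ∑ y, p (x, y)) :
    tsallisEntropy α p
      = tsallisEntropy α (fun x : EX => ∑ y, p (x, y)) +
        ∑ x : EX, (∑ y, p (x, y)) ^ α *
          tsallisEntropy α (fun y : EY => p (x, y) / ∑ y', p (x, y')) := by
  have key : ∀ x y, p (x, y) ^ α
      = (∑ y', p (x, y')) ^ α * (p (x, y) / ∑ y', p (x, y')) ^ α := by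
    intro x y
    rw [← Real.mul_rpow (hpos x).le (div_nonneg (hp0 _) (hpos x).le),
      mul_div_cancel₀ _ (hpos x).ne']
  simp only [tsallisEntropy]
  rw [Fintype.sum_prod_type]
  have hsum : ∀ x : EX, ∑ y, p (x, y) ^ α
      = (∑ y', p (x, y')) ^ α * ∑ y, (p (x, y) / ∑ y', p (x, y')) ^ α := by
    intro x
    rw [Finset.mul_sum]
    exact Finset.sum_congr rfl fun y _ => key x y
  simp only [hsum]
  set c := (1 : ℝ) / (1 - α)
  have expand : ∀ x : EX, (∑ y, p (x, y)) ^ α *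
      (c * (∑ y, (p (x, y) / ∑ y', p (x, y')) ^ α - 1))
      = c * ((∑ y', p (x, y')) ^ α * ∑ y, (p (x, y) / ∑ y', p (x, y')) ^ α)
        - c * (∑ y, p (x, y)) ^ α := fun x => by ring
  simp only [expand, Finset.sum_sub_distrib, ← Finset.mul_sum]
  ring
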